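/- arXiv:2207.01048 — 2 statements merged into one kernel-verified Lean document; each statement's English description precedes it below -/
import Mathlib

section
/- Let ×_Σ be a product on components induced by an interaction signature Σ that is commutative, associative, idempotent (A ×_Σ A = A for all A), and satisfies C ×_Σ D ≤ C for any two components C and D with the same interface. Let A and B be components and let 𝒞 be a finite nonempty set of components, all with the same interface E, such that B ×_Σ C = A for every C ∈ 𝒞 (i.e., 𝒞 is a finite set of quotients of A by B sharing interface E). Then there exists a component P with interface E such that B ×_Σ P = A and P ≤ C for every C ∈ 𝒞; namely, P is the ×_Σ-product of all elements of 𝒞. -/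
/-- A timed-event stream (TES): an infinite sequence of observations
`(obs i, time i)` with nonnegative, strictly increasing, non-Zeno timestamps. -/
structure TES (Event : Type) where
  obs : ℕ → Set Event
  time : ℕ → ℝ
  time_nonneg : ∀ i, 0 ≤ time i
  time_strictMono : ∀ i, time i < time (i + 1)
  nonZeno : ∀ t : ℝ, ∃ i, t < time i

/-- A TES is *over* a set of events `E` if all its observables are subsets of `E`. -/
def TES.Over {Event : Type} (σ : TES Event) (E : Set Event) : Prop :=
  ∀ i, σ.obs i ⊆ E

/-- A component: an interface together with a behavior of TESs over that interface. -/
structure Component (Event : Type) where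
  iface : Set Event
  behavior : Set (TES Event)
  behavior_over : ∀ σ ∈ behavior, σ.Over iface

/-- Refinement of components: `Refines B A` means `B ⊑ A`. -/
def Refines {Event : Type} (B A : Component Event) : Prop :=
  B.iface ⊆ A.iface ∧ B.behavior ⊆ A.behavior

/-- Containment of TESs: same timestamps, pointwise contained observables. -/
def TES.Le {Event : Type} (σ τ : TES Event) : Prop :=
  (∀ i, σ.time i = τ.time i) ∧ (∀ i, σ.obs i ⊆ τ.obs i)

/-- Containment of components: `CompLe A B` means `A ≤ B`. -/
def CompLe {Event : Type} (A B : Component Event) : Prop :=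
  A.iface ⊆ B.iface ∧ ∀ σ ∈ A.behavior, ∃ τ ∈ B.behavior, σ.Le τ

/-- `σ.atTime t` is the observable of `σ` at time `t` (∅ if `t` is not a timestamp). -/
def TES.atTime {Event : Type} (σ : TES Event) (t : ℝ) : Set Event :=
  { e | ∃ i, σ.time i = t ∧ e ∈ σ.obs i }

/-- The set of timestamps of a TES. -/
def TES.dom {Event : Type} (σ : TES Event) : Set ℝ :=
  { t | ∃ i, σ.time i = t }

/-- Synchronous composability: shared events occur at the same times. -/
def RSync {Event : Type} (E₁ E₂ : Set Event) (σ τ : TES Event) : Prop :=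
  ∀ t : ℝ, σ.atTime t ∩ E₂ = τ.atTime t ∩ E₁

/-- `IsSyncComp σ τ υ` means `υ = σ ∪ τ`, the synchronous composition of `σ` and `τ`:
`dom υ = dom σ ∪ dom τ` and `υ(t) = σ(t) ∪ τ(t)` for every time `t`. -/
def IsSyncComp {Event : Type} (σ τ υ : TES Event) : Prop :=
  υ.dom = σ.dom ∪ τ.dom ∧ ∀ t : ℝ, υ.atTime t = σ.atTime t ∪ τ.atTime t

/-- The synchronous product `A ⋈ B` of components. -/
def syncProd {Event : Type} (A B : Component Event) : Component Event where
  iface := A.iface ∪ B.iface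
  behavior :=
    { υ | ∃ σ ∈ A.behavior, ∃ τ ∈ B.behavior,
        RSync A.iface B.iface σ τ ∧ IsSyncComp σ τ υ }
  behavior_over := by
    rintro υ ⟨σ, hσ, τ, hτ, _, _, hat⟩ i e he
    have h : e ∈ υ.atTime (υ.time i) := ⟨i, rfl, he⟩
    rw [hat] at h
    rcases h with ⟨j, _, hj⟩ | ⟨j, _, hj⟩
    · exact Set.mem_union_left _ (A.behavior_over σ hσ j hj)
    · exact Set.mem_union_right _ (B.behavior_over τ hτ j hj)

/-- An interaction signature: a composability relation (parametrized by the two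
interfaces) and a composition function producing a TES over the union interface. -/
structure InteractionSig (Event : Type) where
  R : Set Event → Set Event → TES Event → TES Event → Prop
  comp : TES Event → TES Event → TES Event
  comp_over : ∀ (E₁ E₂ : Set Event) (σ τ : TES Event),
    σ.Over E₁ → τ.Over E₂ → (comp σ τ).Over (E₁ ∪ E₂)

/-- The product `A ×_Σ B` of components under an interaction signature. -/
def InteractionSig.prod {Event : Type} (S : InteractionSig Event)
    (A B : Component Event) : Component Event where
  iface := A.iface ∪ B.iface
  behavior :=
    { x | ∃ σ ∈ A.behavior, ∃ τ ∈ B.behavior,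
        S.R A.iface B.iface σ τ ∧ x = S.comp σ τ }
  behavior_over := by
    rintro x ⟨σ, hσ, τ, hτ, _, rfl⟩
    exact S.comp_over _ _ _ _ (A.behavior_over σ hσ) (B.behavior_over τ hτ)

/-- Union of components. -/
def Component.union {Event : Type} (A B : Component Event) : Component Event where
  iface := A.iface ∪ B.iface
  behavior := A.behavior ∪ B.behavior
  behavior_over := by
    rintro σ (h | h) i e he
    · exact Set.mem_union_left _ (A.behavior_over σ h i he)
    · exact Set.mem_union_right _ (B.behavior_over σ h i he)

/-- The unit component `1 = (∅, TES(∅))`. -/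
def unitComponent (Event : Type) : Component Event where
  iface := ∅
  behavior := { σ | σ.Over ∅ }
  behavior_over := fun _ h => h

/-- The zero component `0 = (∅, ∅)`. -/
def zeroComponent (Event : Type) : Component Event where
  iface := ∅
  behavior := ∅
  behavior_over := fun σ h => absurd h (Set.notMem_empty σ)

/-- `InsertsSilentAt σ τ i t`: `τ` is obtained from `σ` by inserting the silent
observation `(∅, t)` between positions `i` and `i+1`. -/
def InsertsSilentAt {Event : Type} (σ τ : TES Event) (i : ℕ) (t : ℝ) : Prop :=
  (∀ k ≤ i, τ.obs k = σ.obs k ∧ τ.time k = σ.time k) ∧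
  τ.obs (i + 1) = ∅ ∧ τ.time (i + 1) = t ∧
  (∀ k, i < k → τ.obs (k + 1) = σ.obs k ∧ τ.time (k + 1) = σ.time k)

/-- A component is closed under insertion of silent observations. -/
def ClosedUnderSilentInsertion {Event : Type} (A : Component Event) : Prop :=
  ∀ σ ∈ A.behavior, ∀ (i : ℕ) (t : ℝ),
    σ.time i < t → t < σ.time (i + 1) →
    ∀ τ : TES Event, InsertsSilentAt σ τ i t → τ ∈ A.behavior

theorem compLe_refl {Event : Type} (A : Component Event) : CompLe A A :=
  ⟨subset_rfl, fun σ hσ => ⟨σ, hσ, fun _ => rfl, fun _ => subset_rfl⟩⟩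

theorem compLe_trans {Event : Type} {A B C : Component Event}
    (h₁ : CompLe A B) (h₂ : CompLe B C) : CompLe A C := by
  refine ⟨h₁.1.trans h₂.1, fun σ hσ => ?_⟩
  obtain ⟨τ, hτ, ht, ho⟩ := h₁.2 σ hσ
  obtain ⟨υ, hυ, ht', ho'⟩ := h₂.2 τ hτ
  exact ⟨υ, hυ, fun i => (ht i).trans (ht' i), fun i => (ho i).trans (ho' i)⟩

/-- for a commutative, associative, idempotent product satisfying
`C ×_Σ D ≤ C` for equal interfaces, any finite nonempty set of quotients of `A`
by `B` sharing the same interface `E` has a lower bound that is itself a quotient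
with interface `E`. -/
theorem quotients_lowerBound {Event : Type} (S : InteractionSig Event)
    (hcomm : ∀ A B : Component Event, S.prod A B = S.prod B A)
    (hassoc : ∀ A B C : Component Event, S.prod (S.prod A B) C = S.prod A (S.prod B C))
    (hidem : ∀ A : Component Event, S.prod A A = A)
    (hle : ∀ C D : Component Event, C.iface = D.iface → CompLe (S.prod C D) C)
    (A B : Component Event) (E : Set Event) (𝒞 : Finset (Component Event))
    (hne : 𝒞.Nonempty)
    (hiface : ∀ C ∈ 𝒞, C.iface = E)
    (hquot : ∀ C ∈ 𝒞, S.prod B C = A) :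
    ∃ P : Component Event, P.iface = E ∧ S.prod B P = A ∧ ∀ C ∈ 𝒞, CompLe P C := by
  revert hiface hquot
  induction hne using Finset.Nonempty.cons_induction with
  | singleton a =>
      intro hiface hquot
      refine ⟨a, hiface a (by simp), hquot a (by simp), fun C hC => ?_⟩
      simp only [Finset.mem_singleton] at hC
      subst hC; exact compLe_refl _
  | cons a s ha hs ih =>
      intro hiface hquot
      obtain ⟨P, hPi, hPq, hPle⟩ := ih
        (fun C hC => hiface C (Finset.mem_cons_of_mem hC))
        (fun C hC => hquot C (Finset.mem_cons_of_mem hC))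
      have hai : a.iface = E := hiface a (Finset.mem_cons_self a s)
      have haq : S.prod B a = A := hquot a (Finset.mem_cons_self a s)
      refine ⟨S.prod a P, ?_, ?_, ?_⟩
      · show a.iface ∪ P.iface = E
        rw [hai, hPi, Set.union_self]
      · have : S.prod B (S.prod a P) = S.prod A P := by
          rw [← hassoc, haq]
        rw [this, ← hPq, hassoc, hidem, hPq]
      · intro C hC
        rcases Finset.mem_cons.mp hC with rfl | hC
        · exact hle C P (hai.trans hPi.symm)
        · refine compLe_trans ?_ (hPle C hC)
          rw [hcomm]
          exact hle P a (hPi.trans hai.symm)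
end

section
/- Let ×_Σ be a product on components induced by an interaction signature Σ that is commutative, associative, idempotent, and monotonic (B ⊑ A implies B ×_Σ C ⊑ A ×_Σ C). Let A and B be components and let 𝒞 be a finite nonempty set of components, all with the same interface E, such that every C ∈ 𝒞 satisfies C ≠ 0 and C ×_Σ B ⊑ A (i.e., 𝒞 is a finite set of coordinators making B conformant with A, sharing interface E). Then there exists a component U with interface E such that U ≠ 0, U ×_Σ B ⊑ A, and C ≤ U for every C ∈ 𝒞; namely, U is the union of all elements of 𝒞. -/
/-- for a commutative, associative, idempotent, monotonic product,
any finite nonempty set of (nonzero) coordinators making `B` conformant with `A`,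
all sharing interface `E`, has an upper bound that is itself such a coordinator
with interface `E`. -/
theorem coordinators_upperBound {Event : Type} (S : InteractionSig Event)
    (hcomm : ∀ A B : Component Event, S.prod A B = S.prod B A)
    (hassoc : ∀ A B C : Component Event, S.prod (S.prod A B) C = S.prod A (S.prod B C))
    (hidem : ∀ A : Component Event, S.prod A A = A)
    (hmono : ∀ A B C : Component Event, Refines B A → Refines (S.prod B C) (S.prod A C))
    (A B : Component Event) (E : Set Event) (𝒞 : Finset (Component Event))
    (hne : 𝒞.Nonempty)
    (hiface : ∀ C ∈ 𝒞, C.iface = E)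
    (hcoord : ∀ C ∈ 𝒞, C ≠ zeroComponent Event ∧ Refines (S.prod C B) A) :
    ∃ U : Component Event, U.iface = E ∧ U ≠ zeroComponent Event ∧
      Refines (S.prod U B) A ∧ ∀ C ∈ 𝒞, CompLe C U := by
  obtain ⟨C₀, hC₀⟩ := hne
  refine ⟨⟨E, { σ | ∃ C ∈ 𝒞, σ ∈ C.behavior }, ?_⟩, rfl, ?_, ?_, ?_⟩
  · rintro σ ⟨C, hC, hσ⟩
    rw [← hiface C hC]
    exact C.behavior_over σ hσ
  · -- U ≠ zeroComponent
    intro h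
    have hiE : E = (∅ : Set Event) := congrArg Component.iface h
    have hbE : { σ : TES Event | ∃ C ∈ 𝒞, σ ∈ C.behavior } = ∅ :=
      congrArg Component.behavior h
    have hC0b : C₀.behavior = ∅ := by
      ext σ
      simp only [Set.mem_empty_iff_false, iff_false]
      intro hσ
      have : σ ∈ ({ σ : TES Event | ∃ C ∈ 𝒞, σ ∈ C.behavior }) := ⟨C₀, hC₀, hσ⟩
      rw [hbE] at this
      exact this
    apply (hcoord C₀ hC₀).1
    have hC0i : C₀.iface = ∅ := (hiface C₀ hC₀).trans hiE
    cases C₀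
    simp only [zeroComponent, Component.mk.injEq] at *
    exact ⟨hC0i, hC0b⟩
  · -- Refines (S.prod U B) A
    obtain ⟨_, href⟩ := hcoord C₀ hC₀
    constructor
    · have : E ∪ B.iface ⊆ A.iface := by
        rw [← hiface C₀ hC₀]; exact href.1
      exact this
    · rintro x ⟨σ, ⟨C, hC, hσ⟩, τ, hτ, hR, rfl⟩
      have href' := (hcoord C hC).2
      apply href'.2
      refine ⟨σ, hσ, τ, hτ, ?_, rfl⟩
      rwa [hiface C hC]
  · -- upper bound
    intro C hC
    refine ⟨(hiface C hC).le, fun σ hσ => ⟨σ, ⟨C, hC, hσ⟩, fun _ => rfl, fun _ => le_refl _⟩⟩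
end
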